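/- Let N ≥ 1 and z ∈ ℍ, and set q = e^{2πiz} and ξ = e^{2πi/N}. Then log|Δ_N(z)| = φ(N)·log|q| + 24·∑_{n=1}^{∞} ∑_{1 ≤ k ≤ N, gcd(k,N)=1} log|1 − ξᵏ·qⁿ| = 24·∑_{1 ≤ k ≤ N, gcd(k,N)=1} log_q(ξᵏ), where φ is Euler's totient function and all series converge absolutely. -/

import Mathlib

noncomputable section
open Complex Real MeasureTheory UpperHalfPlane Filter Topology
open scoped UpperHalfPlane

/-- The discriminant modular form `Δ(z) = e^{2πiz} ∏_{n ≥ 1} (1 - e^{2πinz})^{24}`. -/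
def Delta (z : ℂ) : ℂ :=
  Complex.exp (2 * (π : ℂ) * Complex.I * z) *
    ∏' n : ℕ, (1 - Complex.exp (2 * (π : ℂ) * Complex.I * ((n : ℂ) + 1) * z)) ^ 24

/-- `Δ_N(z) = ∏_{d ∣ N} Δ(Nz/d)^{μ(d)}` (exponent `-1` meaning the reciprocal). -/
def DeltaN (N : ℕ) (z : ℂ) : ℂ :=
  ∏ d ∈ N.divisors, Delta ((N : ℂ) * z / (d : ℂ)) ^ ((ArithmeticFunction.moebius d : ℤ))

/-- `q = e^{2πiz}` for `z ∈ ℍ`. -/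
def qq (z : ℍ) : ℂ := Complex.exp (2 * (π : ℂ) * Complex.I * (z : ℂ))

/-- `ξ = e^{2πi/N}`, a primitive `N`-th root of unity. -/
def xiN (N : ℕ) : ℂ := Complex.exp (2 * (π : ℂ) * Complex.I / (N : ℂ))

/-- The `q`-logarithm `log_q(t) = (1/24) log|qt| + ∑_{n ≥ 1} log|1 - qⁿ t|`. -/
def qlog (z : ℍ) (t : ℂ) : ℝ :=
  (1 / 24) * Real.log (‖qq z * t‖) +
    ∑' n : ℕ, Real.log (‖1 - (qq z) ^ (n + 1) * t‖)

lemma re_two_pi_I_mul (w : ℂ) : (2 * (π : ℂ) * Complex.I * w).re = -(2 * π * w.im) := by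
  simp [Complex.mul_re, Complex.mul_im]

lemma abs_exp_two_pi_I_mul (w : ℂ) :
    ‖Complex.exp (2 * (π : ℂ) * Complex.I * w)‖ = Real.exp (-(2 * π * w.im)) := by
  rw [Complex.norm_exp, re_two_pi_I_mul]

lemma log_abs_exp_two_pi_I_mul (w : ℂ) :
    Real.log (‖Complex.exp (2 * (π : ℂ) * Complex.I * w)‖) = -(2 * π * w.im) := by
  rw [abs_exp_two_pi_I_mul, Real.log_exp]

lemma abs_exp_lt_one {w : ℂ} (hw : 0 < w.im) :
    ‖Complex.exp (2 * (π : ℂ) * Complex.I * w)‖ < 1 := by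
  rw [abs_exp_two_pi_I_mul, Real.exp_lt_one_iff]
  nlinarith [Real.pi_pos]

/-- summability of complex logs of `1 - g n` with geometric bound. -/
lemma summable_norm_clog {r : ℝ} (hr0 : 0 ≤ r) (hr : r < 1) {g : ℕ → ℂ}
    (hg : ∀ n, ‖g n‖ ≤ r ^ (n + 1)) :
    Summable fun n => ‖Complex.log (1 - g n)‖ := by
  have hgeo : Summable fun n : ℕ => 3 / 2 * r ^ (n + 1) := by
    apply Summable.mul_left
    simpa [pow_succ] using (summable_geometric_of_lt_one hr0 hr).mul_right r
  apply Summable.of_norm_bounded_eventually hgeo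
  rw [Nat.cofinite_eq_atTop]
  have htend : Tendsto (fun n : ℕ => r ^ (n + 1)) atTop (nhds 0) := by
    simpa [pow_succ] using ((tendsto_pow_atTop_nhds_zero_of_lt_one hr0 hr).mul_const r)
  filter_upwards [htend.eventually_lt_const (by norm_num : (0:ℝ) < 1/2)] with n hn
  have h1 : ‖g n‖ ≤ 1 / 2 := le_of_lt (lt_of_le_of_lt (hg n) hn)
  have := Complex.norm_log_one_add_half_le_self (z := -(g n)) (by simpa using h1)
  rw [norm_norm]
  calc ‖Complex.log (1 - g n)‖ = ‖Complex.log (1 + -(g n))‖ := by rw [sub_eq_add_neg]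
    _ ≤ 3 / 2 * ‖-(g n)‖ := this
    _ ≤ 3 / 2 * r ^ (n + 1) := by
        rw [norm_neg]
        exact mul_le_mul_of_nonneg_left (hg n) (by norm_num)

lemma abs_log_abs_le_norm_clog (w : ℂ) :
    |Real.log (‖w‖)| ≤ ‖Complex.log w‖ := by
  rw [← Complex.log_re]; exact Complex.abs_re_le_norm _

lemma summable_abs_log {r : ℝ} (hr0 : 0 ≤ r) (hr : r < 1) {g : ℕ → ℂ}
    (hg : ∀ n, ‖g n‖ ≤ r ^ (n + 1)) :
    Summable fun n => |Real.log (‖1 - g n‖)| := by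
  apply Summable.of_norm_bounded (summable_norm_clog hr0 hr hg)
  intro n
  rw [Real.norm_eq_abs, _root_.abs_abs]
  exact abs_log_abs_le_norm_clog _

lemma summable_log_abs {r : ℝ} (hr0 : 0 ≤ r) (hr : r < 1) {g : ℕ → ℂ}
    (hg : ∀ n, ‖g n‖ ≤ r ^ (n + 1)) :
    Summable fun n => Real.log (‖1 - g n‖) :=
  (summable_abs_log hr0 hr hg).of_abs

/-- log of absolute value of an infinite product. -/
lemma log_abs_tprod {f : ℕ → ℂ} (h0 : ∀ n, f n ≠ 0)
    (hs : Summable fun n => Complex.log (f n)) :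
    Multipliable f ∧ (∏' n, f n) ≠ 0 ∧
      Real.log (‖∏' n, f n‖) = ∑' n, Real.log (‖f n‖) := by
  have hm : Multipliable f :=
    Complex.multipliable_of_summable_log hs
  have hprod : Complex.exp (∑' n, Complex.log (f n)) = ∏' n, f n :=
    Complex.cexp_tsum_eq_tprod h0 hs
  refine ⟨hm, by rw [← hprod]; exact Complex.exp_ne_zero _, ?_⟩
  rw [← hprod, Complex.norm_exp, Real.log_exp, Complex.re_tsum hs]
  exact tsum_congr fun n => (Complex.log_re _)
lemma one_sub_pow_ne {Q : ℂ} (hQ : ‖Q‖ < 1) (n : ℕ) : 1 - Q ^ (n + 1) ≠ 0 := by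
  intro h
  have h2 : Q ^ (n + 1) = 1 := by linear_combination -h
  have h3 : ‖Q‖ ^ (n + 1) = 1 := by rw [← norm_pow, h2, norm_one]
  have h4 : ‖Q‖ ^ (n + 1) < 1 :=
    pow_lt_one₀ (norm_nonneg Q) hQ (Nat.succ_ne_zero n)
  linarith

lemma log_abs_Delta {w : ℂ} (hw : 0 < w.im) :
    Delta w ≠ 0 ∧
    Real.log (‖Delta w‖) =
      -(2 * π * w.im) +
        24 * ∑' n : ℕ,
          Real.log (‖1 - Complex.exp (2 * (π : ℂ) * Complex.I * w) ^ (n + 1)‖) := by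
  set Q := Complex.exp (2 * (π : ℂ) * Complex.I * w) with hQdef
  have hQ : ‖Q‖ < 1 := abs_exp_lt_one hw
  have hQ0 : 0 ≤ ‖Q‖ := norm_nonneg _
  have hg : ∀ n : ℕ, ‖Q ^ (n + 1)‖ ≤ ‖Q‖ ^ (n + 1) := by
    intro n; rw [norm_pow]
  have h0 : ∀ n : ℕ, 1 - Q ^ (n + 1) ≠ 0 := one_sub_pow_ne hQ
  have hs : Summable fun n => Complex.log (1 - Q ^ (n + 1)) :=
    (summable_norm_clog hQ0 hQ hg).of_norm
  obtain ⟨hm, hP0, hlogP⟩ := log_abs_tprod h0 hs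
  have hrw : ∀ n : ℕ,
      Complex.exp (2 * (π : ℂ) * Complex.I * ((n : ℂ) + 1) * w) = Q ^ (n + 1) := by
    intro n
    rw [hQdef, ← Complex.exp_nat_mul]
    congr 1
    push_cast; ring
  have hpow : (∏' n : ℕ, (1 - Q ^ (n + 1))) ^ 24 = ∏' n : ℕ, (1 - Q ^ (n + 1)) ^ 24 := by
    simpa using hm.map_tprod (powMonoidHom 24) (continuous_pow 24)
  have hD : Delta w = Q * (∏' n : ℕ, (1 - Q ^ (n + 1))) ^ 24 := by
    rw [Delta, hpow, ← hQdef]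
    refine congrArg (Q * ·) ?_
    exact tprod_congr fun n => by rw [hrw n]
  have hP24 : (∏' n : ℕ, (1 - Q ^ (n + 1))) ^ 24 ≠ 0 := pow_ne_zero _ hP0
  constructor
  · rw [hD]; exact mul_ne_zero (Complex.exp_ne_zero _) hP24
  · rw [hD, norm_mul, norm_pow,
      Real.log_mul (norm_ne_zero_iff.mpr (Complex.exp_ne_zero _)) (pow_ne_zero _ (norm_ne_zero_iff.mpr hP0)),
      Real.log_pow, log_abs_exp_two_pi_I_mul, hlogP]
    push_cast; ring
lemma one_sub_ne {u : ℂ} (h : ‖u‖ < 1) : 1 - u ≠ 0 := by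
  intro hh
  have : u = 1 := by linear_combination -hh
  rw [this] at h; simp at h

lemma xiN_prim {n : ℕ} (hn : n ≠ 0) : IsPrimitiveRoot (xiN n) n := by
  simpa [xiN] using Complex.isPrimitiveRoot_exp n hn

lemma abs_xiN_pow (N : ℕ) (k : ℕ) : ‖xiN N ^ k‖ = 1 := by
  have h1 : ‖xiN N‖ = 1 := by
    have : (2 * (π : ℂ) * Complex.I / (N : ℂ)) = ((2 * π / N : ℝ) : ℂ) * Complex.I := by
      push_cast; ring
    rw [xiN, this, Complex.norm_exp_ofReal_mul_I]
  rw [norm_pow, h1, one_pow]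

lemma prod_range_one_sub (n : ℕ) (hn : n ≠ 0) (t : ℂ) :
    ∏ j ∈ Finset.range n, (1 - xiN n ^ j * t) = 1 - t ^ n := by
  classical
  have hn0 : 0 < n := Nat.pos_of_ne_zero hn
  have hprim := xiN_prim hn
  have hset : Polynomial.nthRootsFinset n (1 : ℂ) = (Finset.range n).image (xiN n ^ ·) := by
    ext x
    simp only [Polynomial.mem_nthRootsFinset hn0, Finset.mem_image, Finset.mem_range]
    constructor
    · intro hx
      haveI : NeZero n := ⟨hn⟩
      obtain ⟨i, hi, hix⟩ := hprim.eq_pow_of_pow_eq_one hx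
      exact ⟨i, hi, hix⟩
    · rintro ⟨i, _, rfl⟩
      rw [← pow_mul, mul_comm, pow_mul, hprim.pow_eq_one, one_pow]
  have hinj : ∀ x ∈ Finset.range n, ∀ y ∈ Finset.range n,
      xiN n ^ x = xiN n ^ y → x = y := by
    intro x hx y hy hxy
    exact hprim.pow_inj (Finset.mem_range.mp hx) (Finset.mem_range.mp hy) hxy
  have key : ∀ s : ℂ, s ^ n - 1 = ∏ j ∈ Finset.range n, (s - xiN n ^ j) := by
    intro s
    have := congrArg (Polynomial.eval s) (Polynomial.X_pow_sub_one_eq_prod hn0 hprim)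
    simpa [Polynomial.eval_prod, hset, Finset.prod_image hinj] using this
  by_cases ht : t = 0
  · simp [ht, zero_pow hn]
  · have h1 : ∏ j ∈ Finset.range n, (1 - xiN n ^ j * t)
        = ∏ j ∈ Finset.range n, (t * ((1 : ℂ)/t - xiN n ^ j)) := by
      refine Finset.prod_congr rfl fun j _ => ?_
      field_simp
    rw [h1, Finset.prod_mul_distrib, Finset.prod_const, ← key ((1:ℂ)/t), Finset.card_range]
    rw [div_pow, one_pow, mul_sub, mul_one_div_cancel (pow_ne_zero _ ht), mul_one]
lemma sum_Icc_eq_sum_range (n : ℕ) (hn : n ≠ 0) (f : ℂ → ℝ) :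
    ∑ j ∈ Finset.Icc 1 n, f (xiN n ^ j) = ∑ j ∈ Finset.range n, f (xiN n ^ j) := by
  have hn0 : 0 < n := Nat.pos_of_ne_zero hn
  have hone : xiN n ^ n = 1 := (xiN_prim hn).pow_eq_one
  refine Finset.sum_nbij' (fun j => j % n) (fun m => if m = 0 then n else m) ?_ ?_ ?_ ?_ ?_
  · intro a _; exact Finset.mem_range.mpr (Nat.mod_lt a hn0)
  · intro a ha
    rw [Finset.mem_range] at ha
    by_cases h : a = 0 <;> simp [h, Finset.mem_Icc, hn0, Nat.one_le_iff_ne_zero, hn, le_of_lt ha]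
  · intro a ha
    rw [Finset.mem_Icc] at ha
    by_cases h : a = n
    · subst h; simp [Nat.mod_self]
    · have hlt : a < n := lt_of_le_of_ne ha.2 h
      have h0 : a ≠ 0 := by omega
      simp [Nat.mod_eq_of_lt hlt, h0]
  · intro a ha
    rw [Finset.mem_range] at ha
    by_cases h : a = 0
    · simp [h, Nat.mod_self]
    · simp [h, Nat.mod_eq_of_lt ha]
  · intro a _
    exact congrArg f (pow_eq_pow_mod a hone)

lemma sum_log_Icc {t : ℂ} (ht : ‖t‖ < 1) (n : ℕ) (hn : n ≠ 0) :
    ∑ j ∈ Finset.Icc 1 n, Real.log (‖1 - xiN n ^ j * t‖)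
      = Real.log (‖1 - t ^ n‖) := by
  rw [sum_Icc_eq_sum_range n hn (fun u => Real.log (‖1 - u * t‖))]
  have hne : ∀ j ∈ Finset.range n, ‖1 - xiN n ^ j * t‖ ≠ 0 := by
    intro j _
    refine (norm_ne_zero_iff.mpr (one_sub_ne ?_))
    rw [norm_mul, abs_xiN_pow, one_mul]; exact ht
  rw [← Real.log_prod hne, ← norm_prod, prod_range_one_sub n hn t]

lemma sum_coprime_regroup (n : ℕ) (hn : n ≠ 0) (f : ℂ → ℝ) :
    ∑ d ∈ n.divisors, ∑ k ∈ Finset.filter (fun k => Nat.Coprime k d) (Finset.Icc 1 d),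
        f (xiN d ^ k)
      = ∑ j ∈ Finset.Icc 1 n, f (xiN n ^ j) := by
  rw [Finset.sum_sigma' (n.divisors)
    (fun d => Finset.filter (fun k => Nat.Coprime k d) (Finset.Icc 1 d))]
  refine Finset.sum_nbij' (fun a => a.2 * (n / a.1))
    (fun j => ⟨n / Nat.gcd j n, j / Nat.gcd j n⟩) ?_ ?_ ?_ ?_ ?_
  · rintro ⟨d, k⟩ ha
    simp only [Finset.mem_sigma, Nat.mem_divisors, Finset.mem_filter, Finset.mem_Icc] at ha
    obtain ⟨⟨hd, _⟩, ⟨hk1, hkd⟩, _⟩ := ha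
    have hd0 : 0 < d := Nat.pos_of_ne_zero (by rintro rfl; exact hn (Nat.eq_zero_of_zero_dvd hd))
    have he0 : 0 < n / d := Nat.div_pos (Nat.le_of_dvd (Nat.pos_of_ne_zero hn) hd) hd0
    refine Finset.mem_Icc.mpr ⟨Nat.mul_pos hk1 he0, ?_⟩
    calc k * (n / d) ≤ d * (n / d) := Nat.mul_le_mul_right _ hkd
      _ = n := Nat.mul_div_cancel' hd
  · intro j hj
    rw [Finset.mem_Icc] at hj
    have hj0 : 0 < j := hj.1
    have hg0 : 0 < Nat.gcd j n := Nat.gcd_pos_of_pos_left n hj0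
    simp only [Finset.mem_sigma, Nat.mem_divisors, Finset.mem_filter, Finset.mem_Icc]
    refine ⟨⟨Nat.div_dvd_of_dvd (Nat.gcd_dvd_right j n), hn⟩,
      ⟨Nat.div_pos (Nat.le_of_dvd hj0 (Nat.gcd_dvd_left j n)) hg0,
        Nat.div_le_div_right hj.2⟩, Nat.coprime_div_gcd_div_gcd hg0⟩
  · rintro ⟨d, k⟩ ha
    simp only [Finset.mem_sigma, Nat.mem_divisors, Finset.mem_filter, Finset.mem_Icc] at ha
    obtain ⟨⟨hd, _⟩, ⟨hk1, hkd⟩, hco⟩ := ha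
    have hd0 : 0 < d := Nat.pos_of_ne_zero (by rintro rfl; exact hn (Nat.eq_zero_of_zero_dvd hd))
    have he0 : 0 < n / d := Nat.div_pos (Nat.le_of_dvd (Nat.pos_of_ne_zero hn) hd) hd0
    have hgcd : Nat.gcd (k * (n / d)) n = n / d := by
      rw [show Nat.gcd (k * (n / d)) n = Nat.gcd (k * (n / d)) (d * (n / d)) by
          rw [Nat.mul_div_cancel' hd],
        Nat.gcd_mul_right, hco, one_mul]
    have h1 : n / (n / d) = d := Nat.div_div_self hd hn
    have h2 : k * (n / d) / (n / d) = k := Nat.mul_div_cancel k he0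
    simp only [hgcd, h1, h2]
  · intro j hj
    rw [Finset.mem_Icc] at hj
    have hj0 : 0 < j := hj.1
    have hg0 : 0 < Nat.gcd j n := Nat.gcd_pos_of_pos_left n hj0
    have h1 : n / (n / Nat.gcd j n) = Nat.gcd j n :=
      Nat.div_div_self (Nat.gcd_dvd_right j n) hn
    simp only [h1]
    exact Nat.div_mul_cancel (Nat.gcd_dvd_left j n)
  · rintro ⟨d, k⟩ ha
    simp only [Finset.mem_sigma, Nat.mem_divisors, Finset.mem_filter, Finset.mem_Icc] at ha
    obtain ⟨⟨hd, _⟩, ⟨hk1, hkd⟩, _⟩ := ha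
    have hd0 : (d : ℂ) ≠ 0 := by
      have : d ≠ 0 := by rintro rfl; exact hn (Nat.eq_zero_of_zero_dvd hd)
      exact_mod_cast Nat.cast_ne_zero.mpr this
    have hn0 : (n : ℂ) ≠ 0 := Nat.cast_ne_zero.mpr hn
    have : xiN d ^ k = xiN n ^ (k * (n / d)) := by
      rw [xiN, xiN, ← Complex.exp_nat_mul, ← Complex.exp_nat_mul]
      congr 1
      have hnd : ((n / d : ℕ) : ℂ) = (n : ℂ) / (d : ℂ) := Nat.cast_div hd hd0
      push_cast [hnd]
      field_simp
    rw [this]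
lemma cop_mod (k N : ℕ) : Nat.Coprime (k % N) N ↔ Nat.Coprime k N := by
  rw [Nat.Coprime, Nat.Coprime, ← Nat.gcd_rec, Nat.gcd_comm]

lemma card_coprime_Icc (N : ℕ) (hN : N ≠ 0) :
    (Finset.filter (fun k => Nat.Coprime k N) (Finset.Icc 1 N)).card = N.totient := by
  have hN0 : 0 < N := Nat.pos_of_ne_zero hN
  rw [Nat.totient_eq_card_coprime]
  refine Finset.card_nbij' (fun j => j % N) (fun m => if m = 0 then N else m) ?_ ?_ ?_ ?_ <;>
    simp only [Set.MapsTo, Set.LeftInvOn, Set.RightInvOn, Set.EqOn, Finset.mem_coe]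
  · intro a ha
    simp only [Finset.mem_filter, Finset.mem_Icc, Finset.mem_range] at ha ⊢
    refine ⟨Nat.mod_lt a hN0, ?_⟩
    exact Nat.coprime_comm.mp ((cop_mod a N).mpr ha.2)
  · intro m hm
    simp only [Finset.mem_filter, Finset.mem_range, Finset.mem_Icc] at hm ⊢
    by_cases h : m = 0
    · subst h
      have hN1 : N = 1 := by
        have := hm.2
        simpa [Nat.coprime_zero_right] using this
      simp [hN1]
    · rw [if_neg h]
      exact ⟨⟨Nat.one_le_iff_ne_zero.mpr h, le_of_lt hm.1⟩, Nat.coprime_comm.mp hm.2⟩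
  · intro a ha
    simp only [Finset.mem_filter, Finset.mem_Icc] at ha
    by_cases h : a = N
    · have hN1 : N = 1 := by
        have h2 := ha.2
        rw [h] at h2
        simpa [Nat.coprime_self] using h2
      simp [h, hN1]
    · have hlt : a < N := lt_of_le_of_ne ha.1.2 h
      have h0 : a ≠ 0 := by omega
      simp [Nat.mod_eq_of_lt hlt, h0]
  · intro m hm
    simp only [Finset.mem_filter, Finset.mem_range] at hm
    by_cases h : m = 0
    · simp [h, Nat.mod_self]
    · simp [h, Nat.mod_eq_of_lt hm.1]

lemma totient_moebius_sum (N : ℕ) (hN : N ≠ 0) :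
    ∑ d ∈ N.divisors, (ArithmeticFunction.moebius d : ℝ) * ((N / d : ℕ) : ℝ)
      = (N.totient : ℝ) := by
  have key := (ArithmeticFunction.sum_eq_iff_sum_smul_moebius_eq
    (R := ℝ) (f := fun n => (n.totient : ℝ)) (g := fun n => (n : ℝ))).mp
    (fun n _ => by exact_mod_cast Nat.sum_totient n) N (Nat.pos_of_ne_zero hN)
  rw [Nat.sum_divisorsAntidiagonal
    (fun d e => (ArithmeticFunction.moebius d : ℤ) • ((e : ℕ) : ℝ))] at key
  simpa [zsmul_eq_mul] using key

lemma moebius_log_sum {t : ℂ} (ht : ‖t‖ < 1) (N : ℕ) (hN : N ≠ 0) :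
    ∑ d ∈ N.divisors,
        (ArithmeticFunction.moebius d : ℝ) * Real.log (‖1 - t ^ (N / d)‖)
      = ∑ k ∈ Finset.filter (fun k => Nat.Coprime k N) (Finset.Icc 1 N),
          Real.log (‖1 - xiN N ^ k * t‖) := by
  have key := (ArithmeticFunction.sum_eq_iff_sum_smul_moebius_eq (R := ℝ)
    (f := fun d => ∑ k ∈ Finset.filter (fun k => Nat.Coprime k d) (Finset.Icc 1 d),
      Real.log (‖1 - xiN d ^ k * t‖))
    (g := fun e => Real.log (‖1 - t ^ e‖))).mp
    (fun n hn => by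
      rw [sum_coprime_regroup n hn.ne'
        (fun u => Real.log (‖1 - u * t‖)), sum_log_Icc ht n hn.ne'])
    N (Nat.pos_of_ne_zero hN)
  rw [Nat.sum_divisorsAntidiagonal
    (fun d e => (ArithmeticFunction.moebius d : ℤ) • Real.log (‖1 - t ^ e‖))] at key
  simpa [zsmul_eq_mul] using key

/-- for `N ≥ 1`, `z ∈ ℍ`, `q = e^{2πiz}`, `ξ = e^{2πi/N}`,
`log|Δ_N(z)| = φ(N) log|q| + 24 ∑_{n ≥ 1} ∑_{1 ≤ k ≤ N, (k,N)=1} log|1 - ξᵏ qⁿ|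
             = 24 ∑_{1 ≤ k ≤ N, (k,N)=1} log_q(ξᵏ)`,
all series converging absolutely. -/
theorem stmt17 (N : ℕ) (hN : 1 ≤ N) (z : ℍ) :
    Summable (fun n : ℕ =>
      ∑ k ∈ Finset.filter (fun k => Nat.Coprime k N) (Finset.Icc 1 N),
        |Real.log (‖1 - (xiN N) ^ k * (qq z) ^ (n + 1)‖)|) ∧
    Real.log (‖DeltaN N (z : ℂ)‖)
      = (Nat.totient N : ℝ) * Real.log (‖qq z‖) +
          24 * ∑' n : ℕ,
            ∑ k ∈ Finset.filter (fun k => Nat.Coprime k N) (Finset.Icc 1 N),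
              Real.log (‖1 - (xiN N) ^ k * (qq z) ^ (n + 1)‖) ∧
    Real.log (‖DeltaN N (z : ℂ)‖)
      = 24 * ∑ k ∈ Finset.filter (fun k => Nat.Coprime k N) (Finset.Icc 1 N),
          qlog z ((xiN N) ^ k) := by
  have hNne : N ≠ 0 := by omega
  set K := Finset.filter (fun k => Nat.Coprime k N) (Finset.Icc 1 N) with hK
  have hz : 0 < (z : ℂ).im := by rw [UpperHalfPlane.coe_im]; exact z.im_pos
  have hq1 : ‖qq z‖ < 1 := by rw [qq]; exact abs_exp_lt_one hz
  have hq0 : 0 ≤ ‖qq z‖ := norm_nonneg _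
  have hlogq : Real.log (‖qq z‖) = -(2 * π * (z : ℂ).im) := by
    rw [qq]; exact log_abs_exp_two_pi_I_mul _
  have habs : ∀ k n : ℕ, ‖xiN N ^ k * qq z ^ (n + 1)‖
      = ‖qq z‖ ^ (n + 1) := by
    intro k n; rw [norm_mul, abs_xiN_pow, one_mul, norm_pow]
  have hsumk : ∀ k : ℕ,
      Summable fun n : ℕ => |Real.log (‖1 - xiN N ^ k * qq z ^ (n + 1)‖)| :=
    fun k => summable_abs_log hq0 hq1 (fun n => le_of_eq (habs k n))
  have hsumk' : ∀ k : ℕ,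
      Summable fun n : ℕ => Real.log (‖1 - xiN N ^ k * qq z ^ (n + 1)‖) :=
    fun k => (hsumk k).of_abs
  -- summability of the double sums
  have hsummain : Summable (fun n : ℕ =>
      ∑ k ∈ K, |Real.log (‖1 - xiN N ^ k * qq z ^ (n + 1)‖)|) :=
    summable_sum fun k _ => hsumk k
  -- per-divisor inner bound
  have hbound : ∀ d ∈ N.divisors, ∀ n : ℕ,
      ‖(qq z ^ (n + 1)) ^ (N / d)‖ ≤ ‖qq z‖ ^ (n + 1) := by
    intro d hd n
    have hdvd : d ∣ N := (Nat.mem_divisors.mp hd).1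
    have hd0 : 0 < d := Nat.pos_of_dvd_of_pos hdvd (Nat.pos_of_ne_zero hNne)
    have he1 : 1 ≤ N / d := Nat.one_le_div_iff hd0 |>.mpr (Nat.le_of_dvd (Nat.pos_of_ne_zero hNne) hdvd)
    rw [norm_pow, norm_pow]
    calc (‖qq z‖ ^ (n + 1)) ^ (N / d)
        ≤ (‖qq z‖ ^ (n + 1)) ^ 1 :=
          pow_le_pow_of_le_one (by positivity) (pow_le_one₀ hq0 hq1.le) he1
      _ = ‖qq z‖ ^ (n + 1) := pow_one _
  have hT : ∀ d ∈ N.divisors,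
      Summable fun n : ℕ => Real.log (‖1 - (qq z ^ (n + 1)) ^ (N / d)‖) :=
    fun d hd => summable_log_abs hq0 hq1 (hbound d hd)
  -- log |Delta (N z / d)|
  have hlogDelta : ∀ d ∈ N.divisors,
      Delta ((N : ℂ) * (z : ℂ) / (d : ℂ)) ≠ 0 ∧
      Real.log (‖Delta ((N : ℂ) * (z : ℂ) / (d : ℂ))‖)
        = ((N / d : ℕ) : ℝ) * Real.log (‖qq z‖) +
            24 * ∑' n : ℕ, Real.log (‖1 - (qq z ^ (n + 1)) ^ (N / d)‖) := by
    intro d hd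
    have hdvd : d ∣ N := (Nat.mem_divisors.mp hd).1
    have hd0 : d ≠ 0 := by rintro rfl; exact hNne (Nat.eq_zero_of_zero_dvd hdvd)
    have hdC : (d : ℂ) ≠ 0 := Nat.cast_ne_zero.mpr hd0
    have he1 : 1 ≤ N / d := Nat.one_le_div_iff (Nat.pos_of_ne_zero hd0) |>.mpr
      (Nat.le_of_dvd (Nat.pos_of_ne_zero hNne) hdvd)
    have hcast : ((N / d : ℕ) : ℂ) = (N : ℂ) / (d : ℂ) := Nat.cast_div hdvd hdC
    have hrw : (N : ℂ) * (z : ℂ) / (d : ℂ) = ((N / d : ℕ) : ℂ) * (z : ℂ) := by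
      rw [hcast]; ring
    have him : (((N / d : ℕ) : ℂ) * (z : ℂ)).im = ((N / d : ℕ) : ℝ) * (z : ℂ).im := by
      simp [Complex.mul_im]
    have himpos : 0 < (((N / d : ℕ) : ℂ) * (z : ℂ)).im := by
      rw [him]
      have : (0 : ℝ) < ((N / d : ℕ) : ℝ) := by exact_mod_cast he1
      positivity
    have hQe : Complex.exp (2 * (π : ℂ) * Complex.I * (((N / d : ℕ) : ℂ) * (z : ℂ)))
        = qq z ^ (N / d) := by
      rw [show 2 * (π : ℂ) * Complex.I * (((N / d : ℕ) : ℂ) * (z : ℂ))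
          = ((N / d : ℕ) : ℂ) * (2 * (π : ℂ) * Complex.I * (z : ℂ)) by ring,
        Complex.exp_nat_mul, qq]
    obtain ⟨hne, heq⟩ := log_abs_Delta himpos
    rw [hrw]
    refine ⟨hne, ?_⟩
    rw [heq, him, hlogq, hQe]
    have : ∀ n : ℕ, (qq z ^ (N / d)) ^ (n + 1) = (qq z ^ (n + 1)) ^ (N / d) := by
      intro n; rw [← pow_mul, ← pow_mul, Nat.mul_comm]
    rw [tsum_congr fun n => by rw [this n]]
    ring
  -- the factors are nonzero
  have hfac : ∀ d ∈ N.divisors,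
      ‖Delta ((N : ℂ) * (z : ℂ) / (d : ℂ)) ^ (ArithmeticFunction.moebius d : ℤ)‖ ≠ 0 := by
    intro d hd
    exact (norm_ne_zero_iff.mpr (zpow_ne_zero _ (hlogDelta d hd).1))
  -- main computation for the second component
  have hmain : Real.log (‖DeltaN N (z : ℂ)‖)
      = (Nat.totient N : ℝ) * Real.log (‖qq z‖) +
          24 * ∑' n : ℕ, ∑ k ∈ K,
            Real.log (‖1 - xiN N ^ k * qq z ^ (n + 1)‖) := by
    have hstep1 : Real.log (‖DeltaN N (z : ℂ)‖)
        = ∑ d ∈ N.divisors, (ArithmeticFunction.moebius d : ℝ) *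
            (((N / d : ℕ) : ℝ) * Real.log (‖qq z‖) +
              24 * ∑' n : ℕ, Real.log (‖1 - (qq z ^ (n + 1)) ^ (N / d)‖)) := by
      rw [DeltaN, norm_prod, Real.log_prod (fun d hd => hfac d hd)]
      refine Finset.sum_congr rfl fun d hd => ?_
      rw [norm_zpow, Real.log_zpow, (hlogDelta d hd).2]
    rw [hstep1]
    have hstep2 : ∑ d ∈ N.divisors, (ArithmeticFunction.moebius d : ℝ) *
            (((N / d : ℕ) : ℝ) * Real.log (‖qq z‖) +
              24 * ∑' n : ℕ, Real.log (‖1 - (qq z ^ (n + 1)) ^ (N / d)‖))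
        = (∑ d ∈ N.divisors, (ArithmeticFunction.moebius d : ℝ) * ((N / d : ℕ) : ℝ)) *
            Real.log (‖qq z‖) +
          24 * ∑ d ∈ N.divisors, ∑' n : ℕ, (ArithmeticFunction.moebius d : ℝ) *
            Real.log (‖1 - (qq z ^ (n + 1)) ^ (N / d)‖) := by
      rw [Finset.sum_mul, Finset.mul_sum, ← Finset.sum_add_distrib]
      refine Finset.sum_congr rfl fun d hd => ?_
      rw [tsum_mul_left]
      ring
    rw [hstep2, totient_moebius_sum N hNne]
    congr 1
    have hswap : ∑ d ∈ N.divisors, ∑' n : ℕ, (ArithmeticFunction.moebius d : ℝ) *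
            Real.log (‖1 - (qq z ^ (n + 1)) ^ (N / d)‖)
        = ∑' n : ℕ, ∑ d ∈ N.divisors, (ArithmeticFunction.moebius d : ℝ) *
            Real.log (‖1 - (qq z ^ (n + 1)) ^ (N / d)‖) :=
      (Summable.tsum_finsetSum fun d hd => (hT d hd).mul_left _).symm
    rw [hswap]
    congr 1
    refine tsum_congr fun n => ?_
    have htn : ‖qq z ^ (n + 1)‖ < 1 := by
      rw [norm_pow]
      exact pow_lt_one₀ hq0 hq1 (Nat.succ_ne_zero n)
    exact moebius_log_sum htn N hNne
  refine ⟨hsummain, hmain, ?_⟩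
  -- third component
  have hql : ∀ k : ℕ, qlog z (xiN N ^ k)
      = (1 / 24) * Real.log (‖qq z‖) +
          ∑' n : ℕ, Real.log (‖1 - xiN N ^ k * qq z ^ (n + 1)‖) := by
    intro k
    rw [qlog]
    congr 1
    · rw [norm_mul, abs_xiN_pow, mul_one]
    · exact tsum_congr fun n => by rw [mul_comm (qq z ^ (n + 1)) (xiN N ^ k)]
  have hcard : (K.card : ℝ) = (Nat.totient N : ℝ) := by
    rw [hK]; exact_mod_cast card_coprime_Icc N hNne
  rw [hmain]
  have : ∑ k ∈ K, qlog z (xiN N ^ k)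
      = (K.card : ℝ) * ((1 / 24) * Real.log (‖qq z‖)) +
          ∑' n : ℕ, ∑ k ∈ K, Real.log (‖1 - xiN N ^ k * qq z ^ (n + 1)‖) := by
    rw [Finset.sum_congr rfl fun k _ => hql k, Finset.sum_add_distrib, Finset.sum_const,
      nsmul_eq_mul, Summable.tsum_finsetSum fun k _ => hsumk' k]
  rw [this, hcard]
  ring
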